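/- In the setting of the previous example (R = k[[λ₁,λ₂]], B as given, C = B²), the subalgebra R[A,B,C] ⊂ End_R(R³) generated by A = Id and B is free of rank 3 with basis (A,B,C), and equals its own commutant in End_R(R³): any 3×3 matrix over R commuting with B is an R-linear combination of Id, B, and B². -/

import Mathlib

/-!
In the example over `R = k[[λ₁,λ₂]]`: the subalgebra `R[A,B,C] ⊆ End_R(R³) = M₃(R)`
generated by `A = Id` and `B` (with `C = B²`) is free of rank 3 with basis `(A, B, C)`
— i.e. `(1, B, B²)` is linearly independent over `R` and every element of the subalgebra
generated by `B` is an `R`-linear combination `a·1 + b·B + c·B²` — and it equals its own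
commutant: any `3×3` matrix over `R` commuting with `B` lies in this subalgebra.
-/

noncomputable section

open MvPowerSeries

/-- The matrix `B` of the example, over `k[[λ₁,λ₂]]`. -/
def Bmat (k : Type*) [Field k] : Matrix (Fin 3) (Fin 3) (MvPowerSeries (Fin 2) k) :=
  !![0, 0, 1; X 0, 0, 0; 0, X 1, 0]

section Aux

variable {k : Type*} [Field k]

lemma aux_X_ne (s : Fin 2) : (X s : MvPowerSeries (Fin 2) k) ≠ 0 := by
  intro h
  have := congrArg (coeff (Finsupp.single s 1)) h
  simp [coeff_X] at this

lemma aux_B2 : (Bmat k) ^ 2 = !![0, X 1, 0; 0, 0, X 0; X 0 * X 1, 0, 0] := by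
  rw [← Matrix.ext_iff]
  intro i j
  fin_cases i <;> fin_cases j <;>
    simp [Bmat, pow_two, Matrix.mul_apply, Fin.sum_univ_three, Matrix.vecHead, Matrix.vecTail]
  exact mul_comm _ _

set_option maxHeartbeats 1000000 in
lemma aux_mul (a b c a' b' c' : MvPowerSeries (Fin 2) k) :
    (a • 1 + b • Bmat k + c • (Bmat k)^2) * (a' • 1 + b' • Bmat k + c' • (Bmat k)^2)
    = (a * a' + X 0 * X 1 * (b * c' + c * b')) • 1
      + (a * b' + b * a' + X 0 * X 1 * (c * c')) • Bmat k
      + (a * c' + b * b' + c * a') • (Bmat k)^2 := by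
  rw [aux_B2, ← Matrix.ext_iff]
  intro i j
  fin_cases i <;> fin_cases j <;>
    simp [Bmat, Matrix.mul_apply, Fin.sum_univ_three, Matrix.vecHead, Matrix.vecTail,
      Matrix.one_apply] <;> ring

lemma aux_span (Y : Matrix (Fin 3) (Fin 3) (MvPowerSeries (Fin 2) k)) :
    Y ∈ Algebra.adjoin (MvPowerSeries (Fin 2) k) {Bmat k} ↔
      ∃ a b c : MvPowerSeries (Fin 2) k, Y = a • 1 + b • Bmat k + c • (Bmat k) ^ 2 := by
  constructor
  · intro hY
    induction hY using Algebra.adjoin_induction with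
    | mem x hx =>
      rcases hx with rfl
      exact ⟨0, 1, 0, by simp⟩
    | algebraMap r =>
      exact ⟨r, 0, 0, by simp [Algebra.algebraMap_eq_smul_one]⟩
    | add x y hx hy ihx ihy =>
      obtain ⟨a, b, c, rfl⟩ := ihx
      obtain ⟨a', b', c', rfl⟩ := ihy
      exact ⟨a + a', b + b', c + c', by rw [add_smul, add_smul, add_smul]; abel⟩
    | mul x y hx hy ihx ihy =>
      obtain ⟨a, b, c, rfl⟩ := ihx
      obtain ⟨a', b', c', rfl⟩ := ihy
      exact ⟨_, _, _, aux_mul a b c a' b' c'⟩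
  · rintro ⟨a, b, c, rfl⟩
    have hB : Bmat k ∈ Algebra.adjoin (MvPowerSeries (Fin 2) k) {Bmat k} :=
      Algebra.subset_adjoin rfl
    exact add_mem (add_mem (Subalgebra.smul_mem _ (one_mem _) a)
      (Subalgebra.smul_mem _ hB b)) (Subalgebra.smul_mem _ (pow_mem hB 2) c)

end Aux

theorem stmt11 {k : Type*} [Field k] [CharZero k] :
    LinearIndependent (MvPowerSeries (Fin 2) k)
      ![(1 : Matrix (Fin 3) (Fin 3) (MvPowerSeries (Fin 2) k)), Bmat k, (Bmat k) ^ 2] ∧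
    (∀ Y : Matrix (Fin 3) (Fin 3) (MvPowerSeries (Fin 2) k),
      Y ∈ Algebra.adjoin (MvPowerSeries (Fin 2) k) {Bmat k} ↔
        ∃ a b c : MvPowerSeries (Fin 2) k, Y = a • 1 + b • Bmat k + c • (Bmat k) ^ 2) ∧
    (∀ Y : Matrix (Fin 3) (Fin 3) (MvPowerSeries (Fin 2) k),
      Y * Bmat k = Bmat k * Y →
        Y ∈ Algebra.adjoin (MvPowerSeries (Fin 2) k) {Bmat k}) := by
  refine ⟨?_, aux_span, ?_⟩
  · rw [Fintype.linearIndependent_iff]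
    intro g hg i
    have h := fun i j => congrFun (congrFun hg i) j
    have h00 := h 0 0
    have h02 := h 0 2
    have h01 := h 0 1
    rw [aux_B2] at h00 h02 h01
    simp [Bmat, Fin.sum_univ_three, Matrix.vecHead, Matrix.vecTail,
      Matrix.one_apply] at h00 h02 h01
    have h2 : g 2 = 0 := h01.resolve_right (aux_X_ne 1)
    fin_cases i
    · exact h00
    · exact h02
    · exact h2
  · intro Y h
    have e := fun i j => congrFun (congrFun h i) j
    have e01 := e 0 1; have e02 := e 0 2
    have e10 := e 1 0; have e11 := e 1 1; have e12 := e 1 2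
    have e21 := e 2 1; have e22 := e 2 2
    simp only [Bmat, Matrix.mul_apply, Fin.sum_univ_three] at e01 e02 e10 e11 e12 e21 e22
    simp [Matrix.vecHead, Matrix.vecTail] at e01 e02 e10 e11 e12 e21 e22
    have hdvd : (X 1 : MvPowerSeries (Fin 2) k) ∣ Y 0 1 := by
      rw [X_dvd_iff]
      intro m hm
      have hL : coeff (Finsupp.single 0 1 + m) (X 0 * Y 0 1) = coeff m (Y 0 1) := by
        have := coeff_add_monomial_mul (m := Finsupp.single 0 1) (n := m) (φ := Y 0 1) (1 : k)
        simpa [X] using this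
      have hR : coeff (Finsupp.single 0 1 + m) (Y 1 2 * X 1) = 0 := by
        refine X_dvd_iff.mp (dvd_mul_left _ _) _ ?_
        simp [Finsupp.single_apply, hm]
      rw [e11] at hR
      rw [hR] at hL
      exact hL.symm
    obtain ⟨c, hc⟩ := hdvd
    have hY12 : Y 1 2 = X 0 * c := by
      have : Y 1 2 * X 1 = (X 0 * c) * X 1 := by rw [e11, hc]; ring
      exact mul_right_cancel₀ (aux_X_ne 1) this
    have hY11 : Y 1 1 = Y 0 0 := by
      have : X 0 * Y 1 1 = X 0 * Y 0 0 := by rw [← e10]; ring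
      exact mul_left_cancel₀ (aux_X_ne 0) this
    rw [aux_span]
    refine ⟨Y 0 0, Y 0 2, c, ?_⟩
    rw [aux_B2, ← Matrix.ext_iff]
    intro i j
    fin_cases i <;> fin_cases j <;>
      simp [Bmat, Matrix.vecHead, Matrix.vecTail, Matrix.one_apply]
    all_goals first
      | (rw [hc]; ring)
      | (rw [e12]; ring)
      | exact hY11
      | (rw [hY12]; ring)
      | (rw [e22, hY12]; ring)
      | (rw [← e01]; ring)
      | exact e02
      | exact e02.symm
      | exact e01.symm
      | ring
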